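/- For n ≥ 1 and r ≥ 2, Friedman's statistic satisfies E[F_r] = r − 1, E[F_r²] = r² − 1 − 2(r−1)/n, and Var(F_r) = 2(r−1)(1 − 1/n). -/

import Mathlib

open MeasureTheory Finset Real

noncomputable section

instance instMSPerm (r : ℕ) : MeasurableSpace (Equiv.Perm (Fin r)) := ⊤

/-- The joint law of `n` independent uniformly random permutations of `{1, …, r}`:
the uniform probability measure on the finite product space. -/
def friedmanMeasure (n r : ℕ) : Measure (Fin n → Equiv.Perm (Fin r)) :=
  (PMF.uniformOfFintype (Fin n → Equiv.Perm (Fin r))).toMeasure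

/-- `ρ_i(j) = π_i(j) - (r+1)/2`, where `π_i(j) ∈ {1, …, r}` is the rank assigned by the
`i`-th permutation to treatment `j` (a permutation of `Fin r` assigns values in `{0, …, r-1}`,
hence the `+ 1`). -/
def rho (n r : ℕ) (i : Fin n) (j : Fin r) (ω : Fin n → Equiv.Perm (Fin r)) : ℝ :=
  ((ω i j : ℕ) : ℝ) + 1 - ((r : ℝ) + 1) / 2

/-- `S_j = (√12/√(r(r+1)n)) ∑_{i=1}^n ρ_i(j)`. -/
def Sstat (n r : ℕ) (j : Fin r) (ω : Fin n → Equiv.Perm (Fin r)) : ℝ :=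
  Real.sqrt 12 / Real.sqrt ((r : ℝ) * ((r : ℝ) + 1) * (n : ℝ)) * ∑ i, rho n r i j ω

/-- Friedman's statistic `F_r = ∑_{j=1}^r S_j²`. -/
def friedman (n r : ℕ) (ω : Fin n → Equiv.Perm (Fin r)) : ℝ :=
  ∑ j, (Sstat n r j ω) ^ 2

/-- The chi-square distribution with `p` degrees of freedom: the Gamma distribution
with shape `p/2` and rate `1/2`. -/
def chiSq (p : ℕ) : Measure ℝ := ProbabilityTheory.gammaMeasure ((p : ℝ) / 2) (1 / 2)

end

set_option linter.unusedSectionVars false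

namespace FP

/-! ### General sums over finite function spaces -/

variable {G : Type*} [Fintype G] [Nonempty G]

def Y (u : G → ℝ) {m : ℕ} (ω : Fin m → G) : ℝ := ∑ i, u (ω i)

lemma sum_cons (m : ℕ) (f : (Fin (m+1) → G) → ℝ) :
    ∑ ω : Fin (m+1) → G, f ω = ∑ p : G, ∑ ω : Fin m → G, f (Fin.cons p ω) := by
  rw [← Equiv.sum_comp (Fin.consEquiv fun _ => G) f, Fintype.sum_prod_type]
  rfl

lemma Y_cons (u : G → ℝ) (m : ℕ) (p : G) (ω : Fin m → G) :
    Y u (Fin.cons p ω) = u p + Y u ω := by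
  simp [Y, Fin.sum_univ_succ]

lemma S10 (u : G → ℝ) (hu : ∑ p, u p = 0) (m : ℕ) :
    ∑ ω : Fin m → G, Y u ω = 0 := by
  induction m with
  | zero => simp [Y]
  | succ m ih =>
    rw [sum_cons]
    simp only [Y_cons, Finset.sum_add_distrib, ih, Finset.sum_const, add_zero]
    rw [← Finset.smul_sum, hu, smul_zero]

lemma S20 (u : G → ℝ) (hu : ∑ p, u p = 0) (m : ℕ) :
    ∑ ω : Fin m → G, (Y u ω)^2
      = m * (∑ p, (u p)^2) * (Fintype.card G : ℝ) ^ m / (Fintype.card G : ℝ) := by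
  have hN : (Fintype.card G : ℝ) ≠ 0 := Nat.cast_ne_zero.2 Fintype.card_ne_zero
  induction m with
  | zero => simp [Y]
  | succ m ih =>
    rw [sum_cons]
    have expand : ∀ (p : G) (ω : Fin m → G),
        (Y u (Fin.cons p ω))^2 = (u p)^2 * 1 + (2 * u p) * Y u ω + (Y u ω)^2 := by
      intro p ω; rw [Y_cons]; ring
    simp only [expand, Finset.sum_add_distrib, ← Finset.mul_sum, S10 u hu, ih,
      Finset.sum_const, mul_zero, add_zero, nsmul_eq_mul, mul_one]
    simp only [Finset.card_univ]
    push_cast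
    field_simp
    simp only [Fintype.card_fun, Fintype.card_fin, Nat.cast_pow]
    ring

lemma S11 (u v : G → ℝ) (hu : ∑ p, u p = 0) (hv : ∑ p, v p = 0) (m : ℕ) :
    ∑ ω : Fin m → G, (Y u ω) * (Y v ω)
      = m * (∑ p, u p * v p) * (Fintype.card G : ℝ) ^ m / (Fintype.card G : ℝ) := by
  have hN : (Fintype.card G : ℝ) ≠ 0 := Nat.cast_ne_zero.2 Fintype.card_ne_zero
  induction m with
  | zero => simp [Y]
  | succ m ih =>
    rw [sum_cons]
    have expand : ∀ (p : G) (ω : Fin m → G),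
        (Y u (Fin.cons p ω)) * (Y v (Fin.cons p ω))
          = (u p * v p) * 1 + u p * Y v ω + v p * Y u ω + Y u ω * Y v ω := by
      intro p ω; rw [Y_cons, Y_cons]; ring
    simp only [expand, Finset.sum_add_distrib, ← Finset.mul_sum, S10 u hu, S10 v hv, ih,
      Finset.sum_const, mul_zero, add_zero, nsmul_eq_mul, mul_one]
    simp only [Finset.card_univ]
    have h1 : ∑ x : G, u x * ((Fintype.card (Fin m → G) : ℝ) * v x)
        = (Fintype.card (Fin m → G) : ℝ) * ∑ p : G, u p * v p := by
      rw [Finset.mul_sum]; exact Finset.sum_congr rfl fun x _ => by ring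
    rw [h1]
    simp only [Fintype.card_fun, Fintype.card_fin]
    push_cast
    field_simp
    ring

lemma S22 (u v : G → ℝ) (hu : ∑ p, u p = 0) (hv : ∑ p, v p = 0) (m : ℕ) :
    ∑ ω : Fin m → G, (Y u ω)^2 * (Y v ω)^2
      = ((m : ℝ) * ((m : ℝ) - 1) * ((∑ p, (u p)^2) * (∑ p, (v p)^2) + 2 * (∑ p, u p * v p)^2)
            / (Fintype.card G : ℝ)^2
          + (m : ℝ) * (∑ p, (u p)^2 * (v p)^2) / (Fintype.card G : ℝ))
        * (Fintype.card G : ℝ) ^ m := by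
  have hN : (Fintype.card G : ℝ) ≠ 0 := Nat.cast_ne_zero.2 Fintype.card_ne_zero
  induction m with
  | zero => simp [Y]
  | succ m ih =>
    rw [sum_cons]
    have expand : ∀ (p : G) (ω : Fin m → G),
        (Y u (Fin.cons p ω))^2 * (Y v (Fin.cons p ω))^2
          = (u p)^2 * (v p)^2 * 1
            + (2 * ((u p)^2 * v p)) * Y v ω
            + (u p)^2 * (Y v ω)^2
            + (2 * (u p * (v p)^2)) * Y u ω
            + (4 * (u p * v p)) * (Y u ω * Y v ω)
            + (2 * u p) * (Y u ω * (Y v ω)^2)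
            + (v p)^2 * (Y u ω)^2
            + (2 * v p) * ((Y u ω)^2 * Y v ω)
            + (Y u ω)^2 * (Y v ω)^2 := by
      intro p ω; rw [Y_cons, Y_cons]; ring
    simp only [expand, Finset.sum_add_distrib, ← Finset.mul_sum, S10 u hu, S10 v hv,
      S20 u hu, S20 v hv, S11 u v hu hv, ih, Finset.sum_const, mul_zero, add_zero,
      mul_one, nsmul_eq_mul, Finset.card_univ]
    have e6 : ∑ p : G, 2 * u p * (∑ ω : Fin m → G, Y u ω * Y v ω ^ 2) = 0 := by
      rw [← Finset.sum_mul, ← Finset.mul_sum, hu]; ring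
    have e8 : ∑ p : G, 2 * v p * (∑ ω : Fin m → G, Y u ω ^ 2 * Y v ω) = 0 := by
      rw [← Finset.sum_mul, ← Finset.mul_sum, hv]; ring
    rw [e6, e8]
    have c3 : ∑ p : G, u p ^ 2 * ((↑m * ∑ p : G, v p ^ 2) * ↑(Fintype.card G) ^ m / ↑(Fintype.card G))
        = (∑ p : G, u p ^ 2) * ((↑m * ∑ p : G, v p ^ 2) * ↑(Fintype.card G) ^ m / ↑(Fintype.card G)) :=
      (Finset.sum_mul _ _ _).symm
    have c7 : ∑ p : G, v p ^ 2 * ((↑m * ∑ p : G, u p ^ 2) * ↑(Fintype.card G) ^ m / ↑(Fintype.card G))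
        = (∑ p : G, v p ^ 2) * ((↑m * ∑ p : G, u p ^ 2) * ↑(Fintype.card G) ^ m / ↑(Fintype.card G)) :=
      (Finset.sum_mul _ _ _).symm
    have c5 : ∑ p : G, 4 * (u p * v p) * ((↑m * ∑ p : G, u p * v p) * ↑(Fintype.card G) ^ m / ↑(Fintype.card G))
        = 4 * (∑ p : G, u p * v p) * ((↑m * ∑ p : G, u p * v p) * ↑(Fintype.card G) ^ m / ↑(Fintype.card G)) := by
      rw [← Finset.sum_mul, ← Finset.mul_sum]
    have c1 : ∑ x : G, u x ^ 2 * ((Fintype.card (Fin m → G) : ℝ) * v x ^ 2)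
        = (∑ p : G, u p ^ 2 * v p ^ 2) * (Fintype.card G : ℝ) ^ m := by
      rw [Finset.sum_congr rfl (fun x _ => (by ring :
          u x ^ 2 * ((Fintype.card (Fin m → G) : ℝ) * v x ^ 2)
            = u x ^ 2 * v x ^ 2 * (Fintype.card (Fin m → G) : ℝ))),
        ← Finset.sum_mul, Fintype.card_fun, Fintype.card_fin]
      push_cast; ring
    rw [c3, c7, c5, c1]
    push_cast
    field_simp
    ring

/-! ### Moments of a single uniform random permutation -/

lemma sum_range_cast (m : ℕ) : ∑ i ∈ Finset.range m, (i:ℝ) = m*(m-1)/2 := by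
  induction m with
  | zero => simp
  | succ m ih => rw [Finset.sum_range_succ, ih]; push_cast; ring

lemma sum_range_cast_sq (m : ℕ) : ∑ i ∈ Finset.range m, (i:ℝ)^2 = m*(m-1)*(2*m-1)/6 := by
  induction m with
  | zero => simp
  | succ m ih => rw [Finset.sum_range_succ, ih]; push_cast; ring

noncomputable def gv (r : ℕ) (a : Fin r) : ℝ := ((a : ℕ) : ℝ) + 1 - ((r:ℝ)+1)/2

lemma sum_gv (r : ℕ) : ∑ a, gv r a = 0 := by
  have h : ∀ a : Fin r, gv r a = ((a:ℕ):ℝ) + (1 - ((r:ℝ)+1)/2) := fun a => by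
    simp [gv]; ring
  simp only [h, Finset.sum_add_distrib, Finset.sum_const, Finset.card_univ, Fintype.card_fin,
    nsmul_eq_mul]
  rw [Fin.sum_univ_eq_sum_range (fun i => ((i:ℕ):ℝ)) r, sum_range_cast]
  ring

lemma sum_gv_sq (r : ℕ) : ∑ a, (gv r a)^2 = (r:ℝ)*((r:ℝ)^2-1)/12 := by
  have h : ∀ a : Fin r, (gv r a)^2
      = ((a:ℕ):ℝ)^2 + ((1-(r:ℝ)) * ((a:ℕ):ℝ) + ((1-(r:ℝ))/2)^2) := fun a => by
    simp only [gv]; ring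
  simp only [h, Finset.sum_add_distrib, Finset.sum_const, Finset.card_univ, Fintype.card_fin,
    nsmul_eq_mul, ← Finset.mul_sum]
  rw [Fin.sum_univ_eq_sum_range (fun i => ((i:ℕ):ℝ)^2) r, sum_range_cast_sq,
    Fin.sum_univ_eq_sum_range (fun i => ((i:ℕ):ℝ)) r, sum_range_cast]
  ring

variable {r : ℕ}

lemma reindex (τ : Equiv.Perm (Fin r)) (f : Equiv.Perm (Fin r) → ℝ) :
    ∑ p : Equiv.Perm (Fin r), f (p * τ) = ∑ p : Equiv.Perm (Fin r), f p :=
  Equiv.sum_comp (Equiv.mulRight τ) f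

lemma sum_perm_apply (f : Fin r → ℝ) (j : Fin r) :
    (r:ℝ) * ∑ p : Equiv.Perm (Fin r), f (p j)
      = (Fintype.card (Equiv.Perm (Fin r)) : ℝ) * ∑ a, f a := by
  have hconst : ∀ k, (∑ p : Equiv.Perm (Fin r), f (p k))
      = ∑ p : Equiv.Perm (Fin r), f (p j) := by
    intro k
    have h := reindex (Equiv.swap j k) (fun p => f (p j))
    simpa [Equiv.Perm.mul_apply, Equiv.swap_apply_left] using h
  have h1 : ∑ k : Fin r, ∑ p : Equiv.Perm (Fin r), f (p k)
      = (r:ℝ) * ∑ p : Equiv.Perm (Fin r), f (p j) := by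
    rw [Finset.sum_congr rfl fun k _ => hconst k]
    simp [Finset.sum_const, Finset.card_univ, Fintype.card_fin]
  rw [← h1, Finset.sum_comm]
  rw [Finset.sum_congr rfl fun (p : Equiv.Perm (Fin r)) _ => Equiv.sum_comp p f]
  simp [Finset.sum_const, Finset.card_univ, mul_comm]

lemma momA (hr : 1 ≤ r) (j : Fin r) : ∑ p : Equiv.Perm (Fin r), gv r (p j) = 0 := by
  have h := sum_perm_apply (gv r) j
  rw [sum_gv] at h
  have hr0 : (r:ℝ) ≠ 0 := Nat.cast_ne_zero.2 (by omega)
  simpa [mul_zero, hr0] using h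

lemma momB (hr : 1 ≤ r) (j : Fin r) :
    ∑ p : Equiv.Perm (Fin r), (gv r (p j))^2
      = (Fintype.card (Equiv.Perm (Fin r)) : ℝ) * ((r:ℝ)*((r:ℝ)^2-1)/12) / r := by
  have h := sum_perm_apply (fun a => (gv r a)^2) j
  rw [sum_gv_sq] at h
  have hr0 : (r:ℝ) ≠ 0 := Nat.cast_ne_zero.2 (by omega)
  field_simp at h ⊢
  linarith [h]

lemma momCdiag (hr : 1 ≤ r) (j : Fin r) :
    ∑ p : Equiv.Perm (Fin r), gv r (p j) * gv r (p j)
      = (Fintype.card (Equiv.Perm (Fin r)) : ℝ) * ((r:ℝ)*((r:ℝ)^2-1)/12) / r := by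
  rw [← momB hr j]; exact Finset.sum_congr rfl fun p _ => (sq (gv r (p j))).symm

lemma pairinv (τ : Equiv.Perm (Fin r)) (j k : Fin r) :
    ∑ p : Equiv.Perm (Fin r), gv r (p (τ j)) * gv r (p (τ k))
      = ∑ p : Equiv.Perm (Fin r), gv r (p j) * gv r (p k) := by
  have h := reindex τ (fun p => gv r (p j) * gv r (p k))
  simpa [Equiv.Perm.mul_apply] using h

lemma rowC (j : Fin r) :
    ∑ k : Fin r, ∑ p : Equiv.Perm (Fin r), gv r (p j) * gv r (p k) = 0 := by
  rw [Finset.sum_comm]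
  have : ∀ p : Equiv.Perm (Fin r), ∑ k : Fin r, gv r (p j) * gv r (p k) = 0 := by
    intro p
    rw [← Finset.mul_sum, Equiv.sum_comp p (gv r), sum_gv, mul_zero]
  simp [this]

lemma momC (hr : 2 ≤ r) {j k : Fin r} (hjk : j ≠ k) :
    ∑ p : Equiv.Perm (Fin r), gv r (p j) * gv r (p k)
      = -((Fintype.card (Equiv.Perm (Fin r)) : ℝ) * ((r:ℝ)*((r:ℝ)^2-1)/12))
          / ((r:ℝ) * ((r:ℝ)-1)) := by
  have hconst : ∀ k' : Fin r, k' ≠ j →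
      ∑ p : Equiv.Perm (Fin r), gv r (p j) * gv r (p k')
        = ∑ p : Equiv.Perm (Fin r), gv r (p j) * gv r (p k) := by
    intro k' hk'
    have h := pairinv (Equiv.swap k k') j k
    rwa [Equiv.swap_apply_of_ne_of_ne hjk hk'.symm, Equiv.swap_apply_left] at h
  have hrow := rowC (r := r) j
  rw [← Finset.sum_erase_add _ _ (Finset.mem_univ j)] at hrow
  have herase : ∑ k' ∈ Finset.univ.erase j, ∑ p : Equiv.Perm (Fin r), gv r (p j) * gv r (p k')
      = ((r:ℝ)-1) * ∑ p : Equiv.Perm (Fin r), gv r (p j) * gv r (p k) := by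
    rw [Finset.sum_congr rfl (fun k' hk' => hconst k' (Finset.ne_of_mem_erase hk'))]
    rw [Finset.sum_const, Finset.card_erase_of_mem (Finset.mem_univ j), Finset.card_univ,
      Fintype.card_fin, nsmul_eq_mul, Nat.cast_sub (by omega : 1 ≤ r), Nat.cast_one]
  rw [herase] at hrow
  rw [momCdiag (by omega : 1 ≤ r) j] at hrow
  have hr0 : (r:ℝ) ≠ 0 := Nat.cast_ne_zero.2 (by omega)
  have hr1 : (r:ℝ) - 1 ≠ 0 := by
    have : (2:ℝ) ≤ (r:ℝ) := by exact_mod_cast hr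
    linarith
  field_simp at hrow ⊢
  linarith [hrow]

lemma Csq (hr : 2 ≤ r) :
    ∑ j : Fin r, ∑ k : Fin r, (∑ p : Equiv.Perm (Fin r), gv r (p j) * gv r (p k))^2
      = ((Fintype.card (Equiv.Perm (Fin r)) : ℝ) * ((r:ℝ)*((r:ℝ)^2-1)/12))^2 / ((r:ℝ)-1) := by
  have hr0 : (r:ℝ) ≠ 0 := Nat.cast_ne_zero.2 (by omega)
  have hr1 : (r:ℝ) - 1 ≠ 0 := by
    have : (2:ℝ) ≤ (r:ℝ) := by exact_mod_cast hr
    linarith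
  set NN := (Fintype.card (Equiv.Perm (Fin r)) : ℝ) with hNN
  set V := (r:ℝ)*((r:ℝ)^2-1)/12 with hV
  have inner : ∀ j : Fin r,
      ∑ k : Fin r, (∑ p : Equiv.Perm (Fin r), gv r (p j) * gv r (p k))^2
        = (NN*V/r)^2 + ((r:ℝ)-1) * (-(NN*V)/((r:ℝ)*((r:ℝ)-1)))^2 := by
    intro j
    rw [← Finset.sum_erase_add _ _ (Finset.mem_univ j), momCdiag (by omega : 1 ≤ r) j]
    have h2 : ∑ k ∈ Finset.univ.erase j,
        (∑ p : Equiv.Perm (Fin r), gv r (p j) * gv r (p k))^2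
          = ∑ _k ∈ Finset.univ.erase j, (-(NN*V)/((r:ℝ)*((r:ℝ)-1)))^2 :=
      Finset.sum_congr rfl fun k hk => by
        rw [momC hr (Finset.ne_of_mem_erase hk).symm]
    rw [h2, Finset.sum_const, Finset.card_erase_of_mem (Finset.mem_univ j), Finset.card_univ,
      Fintype.card_fin, nsmul_eq_mul, Nat.cast_sub (by omega : 1 ≤ r), Nat.cast_one]
    ring
  rw [Finset.sum_congr rfl fun j _ => inner j, Finset.sum_const, Finset.card_univ,
    Fintype.card_fin, nsmul_eq_mul]
  field_simp
  ring

lemma Dsum (hr : 1 ≤ r) :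
    ∑ j : Fin r, ∑ k : Fin r, ∑ p : Equiv.Perm (Fin r), (gv r (p j))^2 * (gv r (p k))^2
      = (Fintype.card (Equiv.Perm (Fin r)) : ℝ) * ((r:ℝ)*((r:ℝ)^2-1)/12)^2 := by
  have swap1 : ∑ j : Fin r, ∑ k : Fin r, ∑ p : Equiv.Perm (Fin r), (gv r (p j))^2 * (gv r (p k))^2
      = ∑ p : Equiv.Perm (Fin r), ∑ j : Fin r, ∑ k : Fin r, (gv r (p j))^2 * (gv r (p k))^2 := by
    rw [show (∑ j : Fin r, ∑ k : Fin r, ∑ p : Equiv.Perm (Fin r),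
        (gv r (p j))^2 * (gv r (p k))^2)
        = ∑ j : Fin r, ∑ p : Equiv.Perm (Fin r), ∑ k : Fin r, (gv r (p j))^2 * (gv r (p k))^2
      from Finset.sum_congr rfl fun j _ => Finset.sum_comm]
    exact Finset.sum_comm
  rw [swap1]
  have hp : ∀ p : Equiv.Perm (Fin r),
      ∑ j : Fin r, ∑ k : Fin r, (gv r (p j))^2 * (gv r (p k))^2
        = ((r:ℝ)*((r:ℝ)^2-1)/12)^2 := by
    intro p
    rw [← Finset.sum_mul_sum Finset.univ Finset.univ (fun j => (gv r (p j))^2)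
      (fun k => (gv r (p k))^2)]
    rw [Equiv.sum_comp p (fun a => (gv r a)^2), sum_gv_sq]
    ring
  rw [Finset.sum_congr rfl fun p _ => hp p, Finset.sum_const, Finset.card_univ, nsmul_eq_mul]

end FP

lemma integral_fm (n r : ℕ) (f : (Fin n → Equiv.Perm (Fin r)) → ℝ) :
    ∫ ω, f ω ∂(friedmanMeasure n r)
      = (∑ ω : Fin n → Equiv.Perm (Fin r), f ω)
          / (Fintype.card (Equiv.Perm (Fin r)) : ℝ) ^ n := by
  rw [friedmanMeasure, integral_fintype Integrable.of_finite]
  have h : ∀ ω : Fin n → Equiv.Perm (Fin r),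
      ((PMF.uniformOfFintype (Fin n → Equiv.Perm (Fin r))).toMeasure {ω}).toReal
        = ((Fintype.card (Equiv.Perm (Fin r)) : ℝ) ^ n)⁻¹ := by
    intro ω
    rw [PMF.toMeasure_apply_singleton _ _ (measurableSet_singleton ω),
      PMF.uniformOfFintype_apply]
    simp [Fintype.card_fun]
  simp only [Measure.real, h, smul_eq_mul, ← Finset.mul_sum]
  ring

theorem friedman_mean_variance (n r : ℕ) (hn : 1 ≤ n) (hr : 2 ≤ r) :
    (∫ ω, friedman n r ω ∂(friedmanMeasure n r) = (r : ℝ) - 1) ∧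
    (∫ ω, (friedman n r ω) ^ 2 ∂(friedmanMeasure n r)
      = (r : ℝ) ^ 2 - 1 - 2 * ((r : ℝ) - 1) / (n : ℝ)) ∧
    ((∫ ω, (friedman n r ω) ^ 2 ∂(friedmanMeasure n r))
        - (∫ ω, friedman n r ω ∂(friedmanMeasure n r)) ^ 2
      = 2 * ((r : ℝ) - 1) * (1 - 1 / (n : ℝ))) := by
  have hr1 : 1 ≤ r := by omega
  have hr0 : (r:ℝ) ≠ 0 := Nat.cast_ne_zero.2 (by omega)
  have hrR : (2:ℝ) ≤ (r:ℝ) := by exact_mod_cast hr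
  have hrm1 : (r:ℝ) - 1 ≠ 0 := by linarith
  have hrp1 : (r:ℝ) + 1 ≠ 0 := by positivity
  have hn0 : (n:ℝ) ≠ 0 := Nat.cast_ne_zero.2 (by omega)
  have hnpos : (0:ℝ) < n := by positivity
  set NN := (Fintype.card (Equiv.Perm (Fin r)) : ℝ) with hNNdef
  have hNN : NN ≠ 0 := Nat.cast_ne_zero.2 Fintype.card_ne_zero
  set V := (r:ℝ)*((r:ℝ)^2-1)/12 with hVdef
  set c := Real.sqrt 12 / Real.sqrt ((r : ℝ) * ((r : ℝ) + 1) * (n : ℝ)) with hcdef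
  have hc2 : c^2 = 12 / ((r:ℝ) * ((r:ℝ)+1) * (n:ℝ)) := by
    rw [hcdef, div_pow, Real.sq_sqrt (by norm_num : (0:ℝ) ≤ 12),
      Real.sq_sqrt (by positivity : (0:ℝ) ≤ (r:ℝ) * ((r:ℝ)+1) * (n:ℝ))]
  -- rewrite friedman in terms of FP.Y
  have hY : ∀ (j : Fin r) (ω : Fin n → Equiv.Perm (Fin r)),
      ∑ i, rho n r i j ω = FP.Y (fun p : Equiv.Perm (Fin r) => FP.gv r (p j)) ω := by
    intro j ω; rfl
  have hF : ∀ ω, friedman n r ω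
      = c^2 * ∑ j : Fin r, (FP.Y (fun p : Equiv.Perm (Fin r) => FP.gv r (p j)) ω)^2 := by
    intro ω
    rw [friedman, Finset.mul_sum]
    exact Finset.sum_congr rfl fun j _ => by rw [Sstat, hY j ω, mul_pow]
  -- first moment
  have hM1 : ∫ ω, friedman n r ω ∂(friedmanMeasure n r) = (r:ℝ) - 1 := by
    rw [integral_fm]
    have h1 : ∑ ω : Fin n → Equiv.Perm (Fin r), friedman n r ω
        = c^2 * ((r:ℝ) * ((n:ℝ) * (NN * V / r) * NN^n / NN)) := by
      rw [Finset.sum_congr rfl fun ω _ => hF ω, ← Finset.mul_sum, Finset.sum_comm]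
      congr 1
      have h2 : ∀ j : Fin r,
          ∑ ω : Fin n → Equiv.Perm (Fin r),
            (FP.Y (fun p : Equiv.Perm (Fin r) => FP.gv r (p j)) ω)^2
          = (n:ℝ) * (NN * V / r) * NN^n / NN := by
        intro j
        rw [FP.S20 _ (FP.momA hr1 j) n]
        have := FP.momB hr1 j
        rw [this]
      rw [Finset.sum_congr rfl fun j _ => h2 j, Finset.sum_const, Finset.card_univ,
        Fintype.card_fin, nsmul_eq_mul]
    rw [h1, hc2]
    have hNpow : NN^n ≠ 0 := pow_ne_zero _ hNN
    rw [hVdef]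
    field_simp
    ring
  -- second moment
  have hM2 : ∫ ω, (friedman n r ω)^2 ∂(friedmanMeasure n r)
      = (r:ℝ)^2 - 1 - 2*((r:ℝ)-1)/(n:ℝ) := by
    rw [integral_fm]
    have hF2 : ∀ ω, (friedman n r ω)^2
        = c^4 * ∑ j : Fin r, ∑ k : Fin r,
            (FP.Y (fun p : Equiv.Perm (Fin r) => FP.gv r (p j)) ω)^2
              * (FP.Y (fun p : Equiv.Perm (Fin r) => FP.gv r (p k)) ω)^2 := by
      intro ω
      rw [hF ω, ← Finset.sum_mul_sum]
      ring
    have key : ∀ j k : Fin r,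
        ∑ ω : Fin n → Equiv.Perm (Fin r),
          (FP.Y (fun p : Equiv.Perm (Fin r) => FP.gv r (p j)) ω)^2
            * (FP.Y (fun p : Equiv.Perm (Fin r) => FP.gv r (p k)) ω)^2
        = ((n:ℝ)*((n:ℝ)-1)*((NN*V/r)*(NN*V/r))/NN^2)*NN^n
          + (2*(n:ℝ)*((n:ℝ)-1)/NN^2*NN^n)
              * (∑ p : Equiv.Perm (Fin r), FP.gv r (p j) * FP.gv r (p k))^2
          + ((n:ℝ)/NN*NN^n)
              * (∑ p : Equiv.Perm (Fin r), (FP.gv r (p j))^2 * (FP.gv r (p k))^2) := by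
      intro j k
      have h := FP.S22 (fun p : Equiv.Perm (Fin r) => FP.gv r (p j))
        (fun p : Equiv.Perm (Fin r) => FP.gv r (p k)) (FP.momA hr1 j) (FP.momA hr1 k) n
      rw [h, FP.momB hr1 j, FP.momB hr1 k]
      ring
    have hsum : ∑ ω : Fin n → Equiv.Perm (Fin r), (friedman n r ω)^2
        = c^4 * ( ((r:ℝ)^2) * (((n:ℝ)*((n:ℝ)-1)*((NN*V/r)*(NN*V/r))/NN^2)*NN^n)
            + (2*(n:ℝ)*((n:ℝ)-1)/NN^2*NN^n) * ((NN*V)^2/((r:ℝ)-1))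
            + ((n:ℝ)/NN*NN^n) * (NN * V^2) ) := by
      rw [Finset.sum_congr rfl fun ω _ => hF2 ω, ← Finset.mul_sum]
      congr 1
      have hswap : ∑ ω : Fin n → Equiv.Perm (Fin r), ∑ j : Fin r, ∑ k : Fin r,
          (FP.Y (fun p : Equiv.Perm (Fin r) => FP.gv r (p j)) ω)^2
            * (FP.Y (fun p : Equiv.Perm (Fin r) => FP.gv r (p k)) ω)^2
          = ∑ j : Fin r, ∑ k : Fin r, ∑ ω : Fin n → Equiv.Perm (Fin r),
          (FP.Y (fun p : Equiv.Perm (Fin r) => FP.gv r (p j)) ω)^2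
            * (FP.Y (fun p : Equiv.Perm (Fin r) => FP.gv r (p k)) ω)^2 := by
        rw [Finset.sum_comm]
        exact Finset.sum_congr rfl fun j _ => Finset.sum_comm
      rw [hswap]
      rw [Finset.sum_congr rfl fun j _ => Finset.sum_congr rfl fun k _ => key j k]
      simp only [Finset.sum_add_distrib, ← Finset.mul_sum, Finset.sum_const,
        Finset.card_univ, Fintype.card_fin, nsmul_eq_mul]
      rw [FP.Csq hr, FP.Dsum hr1]
      push_cast
      ring
    rw [hsum]
    have hc4 : c^4 = (12 / ((r:ℝ) * ((r:ℝ)+1) * (n:ℝ)))^2 := by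
      rw [show c^4 = (c^2)^2 by ring, hc2]
    rw [hc4, hVdef]
    have hNpow : NN^n ≠ 0 := pow_ne_zero _ hNN
    field_simp
    ring
  refine ⟨hM1, hM2, ?_⟩
  rw [hM1, hM2]
  field_simp
  ring
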